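/- Let κ be an uncountable regular cardinal and let D be a set of binary sequences of length < κ of cardinality κ such that every x : κ → 2 has exactly one initial segment in D, i.e., there is exactly one t ∈ D with t ⊆ x. Then the generalized Baire space ^κκ of κ and the generalized Cantor space ^κ2 of κ are homeomorphic. -/

import Mathlib

/-- A binary sequence, coded as a pair consisting of its length and its values
(values at or beyond the length are irrelevant junk, normalized to `0` by
`IsBSeq`). -/
abbrev BSeq : Type _ := Ordinal × (Ordinal → Fin 2)

/-- The length of a binary sequence. -/
def bLen (t : BSeq) : Ordinal := t.1

/-- The values of a binary sequence. -/
def bVal (t : BSeq) : Ordinal → Fin 2 := t.2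

/-- A pair codes a genuine binary sequence: all values at or beyond the length
are `0`. -/
def IsBSeq (t : BSeq) : Prop := ∀ β, bLen t ≤ β → bVal t β = 0

/-- `BExt t u` means `t ⊆ u`: the binary sequence `u` extends `t`. -/
def BExt (t u : BSeq) : Prop := bLen t ≤ bLen u ∧ ∀ β < bLen t, bVal u β = bVal t β

/-- `BExtFun t x` means `t ⊆ x`: the total function `x` extends the binary
sequence `t`. -/
def BExtFun (t : BSeq) (x : Ordinal → Fin 2) : Prop := ∀ β < bLen t, x β = bVal t β

/-- `x↾γ`: the restriction of `x : κ → 2` to `γ`, as a binary sequence of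
length `γ`. -/
noncomputable def bRestrict (x : Ordinal → Fin 2) (γ : Ordinal) : BSeq :=
  (γ, fun β => if β < γ then x β else 0)

/-- The lexicographic ordering on binary sequences. -/
def BLex (s t : BSeq) : Prop :=
  (BExt s t ∧ s ≠ t) ∨
    ∃ γ, γ < bLen s ∧ γ < bLen t ∧ (∀ β < γ, bVal s β = bVal t β) ∧ bVal s γ < bVal t γ

/-- The underlying set of the generalized Baire space of `o`: all functions
from `{α | α < o}` to `{α | α < o}`. -/
def GBaire (o : Ordinal) : Type _ := ↥(Set.Iio o) → ↥(Set.Iio o)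

/-- The underlying set of the generalized Cantor space of `o`: all functions
from `{α | α < o}` to `2`. -/
def GCantor (o : Ordinal) : Type _ := ↥(Set.Iio o) → Fin 2

/-- The topology of the generalized Baire space, generated by the basic open
sets `N_s = {x | x↾α = s↾α}` for `α < o`. -/
def baireTopology (o : Ordinal) : TopologicalSpace (GBaire o) :=
  TopologicalSpace.generateFrom
    {U : Set (GBaire o) | ∃ α : Ordinal, α < o ∧ ∃ s : GBaire o,
      U = {x : GBaire o | ∀ β : ↥(Set.Iio o), (β : Ordinal) < α → x β = s β}}

/-- The topology of the generalized Cantor space, generated by the basic open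
sets `N_s = {x | x↾α = s↾α}` for `α < o`. -/
def cantorTopology (o : Ordinal) : TopologicalSpace (GCantor o) :=
  TopologicalSpace.generateFrom
    {U : Set (GCantor o) | ∃ α : Ordinal, α < o ∧ ∃ s : GCantor o,
      U = {x : GCantor o | ∀ β : ↥(Set.Iio o), (β : Ordinal) < α → x β = s β}}

universe u

namespace Stmt11Aux

open Ordinal Set Cardinal

noncomputable section

variable {L L' : Ordinal.{u} → Ordinal.{u}}

/-! ### Partial sums of a transfinite sequence of ordinals -/

/-- `sums L α` is the ordinal sum `Σ_{β<α} L β`. -/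
def sums (L : Ordinal.{u} → Ordinal.{u}) (α : Ordinal.{u}) : Ordinal.{u} :=
  Ordinal.limitRecOn α 0 (fun β ih => ih + L β)
    (fun β _ ih => Ordinal.bsup.{u, u} β fun γ h => ih γ h)

theorem sums_zero (L : Ordinal.{u} → Ordinal.{u}) : sums L 0 = 0 := by
  simp [sums]

theorem sums_succ (L : Ordinal.{u} → Ordinal.{u}) (α : Ordinal.{u}) :
    sums L (Order.succ α) = sums L α + L α := by
  simp [sums]

theorem sums_limit (L : Ordinal.{u} → Ordinal.{u}) {β : Ordinal.{u}} (h : Order.IsSuccLimit β) :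
    sums L β = Ordinal.bsup.{u, u} β fun γ _ => sums L γ := by
  rw [sums, Ordinal.limitRecOn_limit _ _ _ _ h]
  rfl

theorem sums_mono (L : Ordinal.{u} → Ordinal.{u}) : Monotone (sums L) := by
  intro α β hab
  induction β using Ordinal.induction with
  | h β IH =>
    rcases Ordinal.zero_or_succ_or_isSuccLimit β with h0 | ⟨γ, rfl⟩ | hl
    · subst h0
      rw [nonpos_iff_eq_zero.mp hab]
    · rcases eq_or_lt_of_le hab with rfl | hlt
      · rfl
      · have hle : α ≤ γ := Order.lt_succ_iff.mp hlt
        calc sums L α ≤ sums L γ := IH γ (Order.lt_succ γ) hle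
        _ ≤ sums L γ + L γ := le_self_add
        _ = sums L (Order.succ γ) := (sums_succ L γ).symm
    · rcases eq_or_lt_of_le hab with rfl | hlt
      · rfl
      · rw [sums_limit L hl]
        exact Ordinal.le_bsup (fun γ _ => sums L γ) α hlt

theorem sums_strictMono (hL : ∀ γ, 0 < L γ) :
    StrictMono (sums L) := by
  intro α β h
  calc sums L α < sums L α + L α := by
        conv_lhs => rw [← add_zero (sums L α)]
        exact (add_lt_add_iff_left _).2 (hL α)
  _ = sums L (Order.succ α) := (sums_succ L α).symm
  _ ≤ sums L β := sums_mono L (Order.succ_le_of_lt h)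

theorem le_sums (hL : ∀ γ, 0 < L γ) (α : Ordinal.{u}) :
    α ≤ sums L α :=
  (sums_strictMono hL).le_apply

theorem sums_lt_ord {κ : Cardinal.{u}} (hreg : κ.IsRegular)
    (hL : ∀ γ, L γ < κ.ord) : ∀ {α}, α < κ.ord → sums L α < κ.ord := by
  intro α
  induction α using Ordinal.induction with
  | h α IH =>
    intro hα
    rcases Ordinal.zero_or_succ_or_isSuccLimit α with h0 | ⟨γ, rfl⟩ | hl
    · subst h0
      rwa [sums_zero]
    · have hγ : γ < κ.ord := (Order.lt_succ γ).trans hα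
      rw [sums_succ, Cardinal.lt_ord, Ordinal.card_add]
      exact Cardinal.add_lt_of_lt hreg.aleph0_le
        (Cardinal.lt_ord.1 (IH γ (Order.lt_succ γ) hγ)) (Cardinal.lt_ord.1 (hL γ))
    · rw [sums_limit L hl]
      exact Cardinal.bsup_lt_ord_of_isRegular hreg (Cardinal.lt_ord.1 hα)
        fun γ hγ => IH γ hγ (hγ.trans hα)

theorem sums_congr {γ : Ordinal.{u}} (h : ∀ β < γ, L' β = L β) :
    ∀ α ≤ γ, sums L' α = sums L α := by
  intro α
  induction α using Ordinal.induction with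
  | h α IH =>
    intro hα
    rcases Ordinal.zero_or_succ_or_isSuccLimit α with h0 | ⟨b, rfl⟩ | hl
    · rw [h0, sums_zero, sums_zero]
    · have hb : b < γ := lt_of_lt_of_le (Order.lt_succ b) hα
      rw [sums_succ, sums_succ, IH b (Order.lt_succ b) hb.le, h b hb]
    · rw [sums_limit _ hl, sums_limit _ hl]
      have heq : (fun (β : Ordinal.{u}) (_ : β < α) => sums L' β)
          = fun (β : Ordinal.{u}) (_ : β < α) => sums L β := by
        funext β hβ
        exact IH β hβ (hβ.le.trans hα)
      rw [heq]

/-! ### The index of a position inside a concatenation -/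

/-- `idx L ξ` is the unique `α` with `sums L α ≤ ξ < sums L (α+1)`. -/
def idx (L : Ordinal.{u} → Ordinal.{u}) (ξ : Ordinal.{u}) : Ordinal.{u} :=
  sInf {α | ξ < sums L (Order.succ α)}

theorem self_mem_idxSet (hL : ∀ γ, 0 < L γ) (ξ : Ordinal.{u}) :
    ξ ∈ {α | ξ < sums L (Order.succ α)} :=
  lt_of_lt_of_le (Order.lt_succ ξ) (le_sums hL _)

theorem lt_sums_succ_idx (hL : ∀ γ, 0 < L γ) (ξ : Ordinal.{u}) :
    ξ < sums L (Order.succ (idx L ξ)) :=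
  csInf_mem (⟨ξ, self_mem_idxSet hL ξ⟩ : Set.Nonempty {α | ξ < sums L (Order.succ α)})

theorem idx_le (hL : ∀ γ, 0 < L γ) (ξ : Ordinal.{u}) :
    idx L ξ ≤ ξ :=
  csInf_le (OrderBot.bddBelow _) (self_mem_idxSet hL ξ)

theorem sums_idx_le (hL : ∀ γ, 0 < L γ) (ξ : Ordinal.{u}) :
    sums L (idx L ξ) ≤ ξ := by
  rcases Ordinal.zero_or_succ_or_isSuccLimit (idx L ξ) with h0 | ⟨γ, hγ⟩ | hl
  · rw [h0, sums_zero]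
    exact zero_le (a := ξ)
  · replace hγ := hγ.symm
    by_contra hlt
    push_neg at hlt
    have hmem : γ ∈ {α | ξ < sums L (Order.succ α)} := by
      rw [Set.mem_setOf_eq, ← hγ]
      exact hlt
    have h1 : idx L ξ ≤ γ := csInf_le (OrderBot.bddBelow _) hmem
    rw [hγ] at h1
    exact (Order.lt_succ γ).not_ge h1
  · rw [sums_limit L hl]
    apply Ordinal.bsup_le
    intro γ hγ
    have hnm : γ ∉ {α | ξ < sums L (Order.succ α)} :=
      fun hm => (csInf_le (OrderBot.bddBelow _) hm).not_gt hγ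
    have h1 : sums L (Order.succ γ) ≤ ξ := not_lt.mp hnm
    exact (sums_mono L (Order.le_succ γ)).trans h1

theorem idx_eq {α ξ : Ordinal.{u}}
    (h1 : sums L α ≤ ξ) (h2 : ξ < sums L (Order.succ α)) : idx L ξ = α := by
  refine le_antisymm (csInf_le (OrderBot.bddBelow _) h2) ?_
  by_contra h
  push_neg at h
  have hmem : ξ < sums L (Order.succ (idx L ξ)) :=
    csInf_mem (⟨α, h2⟩ : Set.Nonempty {a | ξ < sums L (Order.succ a)})
  have h3 : sums L (Order.succ (idx L ξ)) ≤ sums L α := sums_mono L (Order.succ_le_of_lt h)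
  exact absurd (hmem.trans_le (h3.trans h1)) (lt_irrefl ξ)

/-! ### Concatenation of a transfinite sequence of binary sequences -/

/-- The lengths of the entries of `X`. -/
def lenF (X : Ordinal.{u} → BSeq.{u, u}) : Ordinal.{u} → Ordinal.{u} := fun β => bLen (X β)

/-- The concatenation of the binary sequences `X 0, X 1, …`. -/
def concat (X : Ordinal.{u} → BSeq.{u, u}) : Ordinal.{u} → Fin 2 := fun ξ =>
  bVal (X (idx (lenF X) ξ)) (ξ - sums (lenF X) (idx (lenF X) ξ))

theorem concat_eval {X : Ordinal.{u} → BSeq.{u, u}} (hX : ∀ β, 0 < bLen (X β)) {α ζ : Ordinal.{u}}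
    (hζ : ζ < bLen (X α)) :
    concat X (sums (lenF X) α + ζ) = bVal (X α) ζ := by
  have hidx : idx (lenF X) (sums (lenF X) α + ζ) = α := by
    refine idx_eq (le_self_add) ?_
    rw [sums_succ]
    exact (add_lt_add_iff_left _).2 hζ
  rw [concat, hidx, Ordinal.add_sub_cancel]

/-- The tail of `y` starting at position `δ`. -/
def tail (y : Ordinal.{u} → Fin 2) (δ : Ordinal.{u}) : Ordinal.{u} → Fin 2 := fun ζ => y (δ + ζ)

theorem concat_ext {X : Ordinal.{u} → BSeq.{u, u}} (hX : ∀ β, 0 < bLen (X β)) (α : Ordinal.{u}) :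
    BExtFun (X α) (tail (concat X) (sums (lenF X) α)) :=
  fun _ζ hζ => concat_eval hX hζ

theorem concat_congr {X X' : Ordinal.{u} → BSeq.{u, u}} (hX : ∀ β, 0 < bLen (X β)) {ξ : Ordinal.{u}}
    (h : ∀ β ≤ ξ, X' β = X β) : concat X' ξ = concat X ξ := by
  have hlen : ∀ β < Order.succ ξ, lenF X' β = lenF X β := fun β hβ => by
    rw [lenF, lenF, h β (Order.lt_succ_iff.mp hβ)]
  have hs : ∀ α ≤ Order.succ ξ, sums (lenF X') α = sums (lenF X) α := sums_congr hlen
  have hmemself : ξ < sums (lenF X') (Order.succ ξ) := by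
    rw [hs _ le_rfl]
    exact self_mem_idxSet hX ξ
  have hidx : idx (lenF X') ξ = idx (lenF X) ξ := by
    apply le_antisymm
    · apply csInf_le (OrderBot.bddBelow _)
      have h2 := lt_sums_succ_idx hX ξ
      have hle : idx (lenF X) ξ ≤ ξ := idx_le hX ξ
      show ξ < sums (lenF X') (Order.succ (idx (lenF X) ξ))
      rwa [hs _ (Order.succ_le_succ hle)]
    · apply csInf_le (OrderBot.bddBelow _)
      have hle' : idx (lenF X') ξ ≤ ξ := csInf_le (OrderBot.bddBelow _) hmemself
      have h2' : ξ < sums (lenF X') (Order.succ (idx (lenF X') ξ)) :=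
        csInf_mem (⟨ξ, hmemself⟩ : Set.Nonempty {a | ξ < sums (lenF X') (Order.succ a)})
      show ξ < sums (lenF X) (Order.succ (idx (lenF X') ξ))
      rwa [hs _ (Order.succ_le_succ hle')] at h2'
  have hiξ : idx (lenF X) ξ ≤ ξ := idx_le hX ξ
  rw [concat, concat, hidx, hs _ (hiξ.trans (Order.le_succ ξ)), h _ hiξ]

end

end Stmt11Aux
namespace Stmt11Aux

open Ordinal Set Cardinal

noncomputable section

variable {D : Set BSeq.{u, u}}
variable (huniq : ∀ x : Ordinal.{u} → Fin 2, ∃! t : BSeq.{u, u}, t ∈ D ∧ BExtFun t x)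

/-- The unique element of `D` which is an initial segment of `y`. -/
def dseg (y : Ordinal.{u} → Fin 2) : BSeq.{u, u} := ((huniq y).exists).choose

theorem dseg_spec (y : Ordinal.{u} → Fin 2) :
    dseg huniq y ∈ D ∧ BExtFun (dseg huniq y) y := ((huniq y).exists).choose_spec

theorem dseg_eq {t : BSeq.{u, u}} {y : Ordinal.{u} → Fin 2} (ht : t ∈ D) (h : BExtFun t y) :
    dseg huniq y = t :=
  (huniq y).unique (dseg_spec huniq y) ⟨ht, h⟩

theorem dseg_congr {y y' : Ordinal.{u} → Fin 2}
    (h : ∀ β < bLen (dseg huniq y), y' β = y β) :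
    dseg huniq y' = dseg huniq y :=
  dseg_eq huniq (dseg_spec huniq y).1 fun β hβ => (h β hβ).trans ((dseg_spec huniq y).2 β hβ)

/-- The sequence of offsets arising when parsing `y` into consecutive blocks from `D`. -/
def py (y : Ordinal.{u} → Fin 2) (α : Ordinal.{u}) : Ordinal.{u} :=
  Ordinal.limitRecOn α 0 (fun _ ih => ih + bLen (dseg huniq (tail y ih)))
    (fun β _ ih => Ordinal.bsup.{u, u} β fun γ h => ih γ h)

/-- The sequence of blocks from `D` into which `y` is parsed. -/
def Xp (y : Ordinal.{u} → Fin 2) (α : Ordinal.{u}) : BSeq.{u, u} :=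
  dseg huniq (tail y (py huniq y α))

theorem Xp_mem (y : Ordinal.{u} → Fin 2) (α : Ordinal.{u}) : Xp huniq y α ∈ D :=
  (dseg_spec huniq _).1

theorem py_zero (y : Ordinal.{u} → Fin 2) : py huniq y 0 = 0 := by simp [py]

theorem py_succ (y : Ordinal.{u} → Fin 2) (α : Ordinal.{u}) :
    py huniq y (Order.succ α) =
      py huniq y α + bLen (dseg huniq (tail y (py huniq y α))) := by
  simp [py]

theorem py_limit (y : Ordinal.{u} → Fin 2) {β : Ordinal.{u}} (hβ : Order.IsSuccLimit β) :
    py huniq y β = Ordinal.bsup.{u, u} β fun γ _ => py huniq y γ := by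
  rw [py, Ordinal.limitRecOn_limit _ _ _ _ hβ]
  rfl

theorem sums_py (y : Ordinal.{u} → Fin 2) :
    ∀ α, sums (lenF (Xp huniq y)) α = py huniq y α := by
  intro α
  induction α using Ordinal.induction with
  | h α IH =>
    rcases Ordinal.zero_or_succ_or_isSuccLimit α with h0 | ⟨γ, rfl⟩ | hl
    · rw [h0, sums_zero, py_zero]
    · rw [sums_succ, py_succ, IH γ (Order.lt_succ γ)]
      rfl
    · rw [sums_limit _ hl, py_limit huniq y hl]
      have heq : (fun (γ : Ordinal.{u}) (_ : γ < α) => sums (lenF (Xp huniq y)) γ)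
          = fun (γ : Ordinal.{u}) (_ : γ < α) => py huniq y γ := by
        funext γ hγ
        exact IH γ hγ
      rw [heq]

theorem py_mono (y : Ordinal.{u} → Fin 2) {α β : Ordinal.{u}} (h : α ≤ β) :
    py huniq y α ≤ py huniq y β := by
  rw [← sums_py, ← sums_py]
  exact sums_mono _ h

theorem Xp_pos (hpos : ∀ t ∈ D, 0 < bLen t) (y : Ordinal.{u} → Fin 2) :
    ∀ β, 0 < bLen (Xp huniq y β) := fun β => hpos _ (Xp_mem huniq y β)

/-- Parsing the concatenation of a sequence of blocks from `D` recovers the blocks. -/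
theorem py_concat (hpos : ∀ t ∈ D, 0 < bLen t) {X : Ordinal.{u} → BSeq.{u, u}}
    (hXD : ∀ β, X β ∈ D) :
    ∀ α, py huniq (concat X) α = sums (lenF X) α ∧ Xp huniq (concat X) α = X α := by
  have hX : ∀ β, 0 < bLen (X β) := fun β => hpos _ (hXD β)
  have key : ∀ β, py huniq (concat X) β = sums (lenF X) β →
      Xp huniq (concat X) β = X β := by
    intro β hβ
    rw [Xp, hβ]
    exact dseg_eq huniq (hXD β) (concat_ext hX β)
  intro α
  induction α using Ordinal.induction with
  | h α IH =>
    rcases Ordinal.zero_or_succ_or_isSuccLimit α with h0 | ⟨γ, rfl⟩ | hl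
    · subst h0
      have hp : py huniq (concat X) 0 = sums (lenF X) 0 := by rw [py_zero, sums_zero]
      exact ⟨hp, key 0 hp⟩
    · have hγ := IH γ (Order.lt_succ γ)
      have hXγ : dseg huniq (tail (concat X) (sums (lenF X) γ)) = X γ := by
        have h2 := key γ hγ.1
        rwa [Xp, hγ.1] at h2
      have hp : py huniq (concat X) (Order.succ γ) = sums (lenF X) (Order.succ γ) := by
        rw [py_succ, sums_succ, hγ.1, hXγ]
        rfl
      exact ⟨hp, key _ hp⟩
    · have hp : py huniq (concat X) α = sums (lenF X) α := by
        rw [py_limit _ _ hl, sums_limit _ hl]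
        have heq : (fun (γ : Ordinal.{u}) (_ : γ < α) => py huniq (concat X) γ)
            = fun (γ : Ordinal.{u}) (_ : γ < α) => sums (lenF X) γ := by
          funext γ hγ
          exact (IH γ hγ).1
        rw [heq]
      exact ⟨hp, key _ hp⟩

/-- Concatenating the parse of `y` gives back `y`. -/
theorem concat_Xp (hpos : ∀ t ∈ D, 0 < bLen t) (y : Ordinal.{u} → Fin 2) (ξ : Ordinal.{u}) :
    concat (Xp huniq y) ξ = y ξ := by
  have hX : ∀ β, 0 < bLen (Xp huniq y β) := Xp_pos huniq hpos y
  have hs : ∀ α, sums (lenF (Xp huniq y)) α = py huniq y α := sums_py huniq y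
  set i := idx (lenF (Xp huniq y)) ξ with hi
  have h1 : py huniq y i ≤ ξ := by
    rw [← hs]
    exact sums_idx_le (L := lenF (Xp huniq y)) hX ξ
  have h2 : ξ < py huniq y i + bLen (Xp huniq y i) := by
    have h2' := lt_sums_succ_idx (L := lenF (Xp huniq y)) hX ξ
    rwa [sums_succ, hs] at h2'
  have h3 : ξ - py huniq y i < bLen (Xp huniq y i) :=
    Ordinal.sub_lt_of_lt_add h2 (hX i)
  have h4 := (dseg_spec huniq (tail y (py huniq y i))).2 _ h3
  calc concat (Xp huniq y) ξ = bVal (Xp huniq y i) (ξ - sums (lenF (Xp huniq y)) i) := rfl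
  _ = tail y (py huniq y i) (ξ - py huniq y i) := by rw [hs]; exact h4.symm
  _ = y ξ := by rw [tail, Ordinal.add_sub_cancel_of_le h1]

/-- Congruence for a single parsed block. -/
theorem dsegtail_congr {y y' : Ordinal.{u} → Fin 2} {α b : Ordinal.{u}}
    (hag : ∀ ζ < py huniq y α, y' ζ = y ζ) (hb : b < α) :
    dseg huniq (tail y' (py huniq y b)) = dseg huniq (tail y (py huniq y b)) := by
  apply dseg_congr
  intro ζ hζ
  have hlt : py huniq y b + ζ < py huniq y α := by
    have h1 : py huniq y b + ζ < py huniq y (Order.succ b) := by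
      rw [py_succ]
      exact (add_lt_add_iff_left _).2 hζ
    exact h1.trans_le (py_mono huniq y (Order.succ_le_of_lt hb))
  exact hag _ hlt

theorem py_congr {y y' : Ordinal.{u} → Fin 2} {α : Ordinal.{u}}
    (hag : ∀ ζ < py huniq y α, y' ζ = y ζ) :
    ∀ β ≤ α, py huniq y' β = py huniq y β := by
  intro β
  induction β using Ordinal.induction with
  | h β IH =>
    intro hβ
    rcases Ordinal.zero_or_succ_or_isSuccLimit β with h0 | ⟨b, rfl⟩ | hl
    · rw [h0, py_zero, py_zero]
    · have hb : b < α := lt_of_lt_of_le (Order.lt_succ b) hβ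
      have hpb := IH b (Order.lt_succ b) hb.le
      rw [py_succ, py_succ, hpb, dsegtail_congr huniq hag hb]
    · rw [py_limit _ _ hl, py_limit _ _ hl]
      have heq : (fun (γ : Ordinal.{u}) (_ : γ < β) => py huniq y' γ)
          = fun (γ : Ordinal.{u}) (_ : γ < β) => py huniq y γ := by
        funext γ hγ
        exact IH γ hγ (hγ.le.trans hβ)
      rw [heq]

theorem Xp_congr {y y' : Ordinal.{u} → Fin 2} {α : Ordinal.{u}}
    (hag : ∀ ζ < py huniq y α, y' ζ = y ζ) {β : Ordinal.{u}} (hb : β < α) :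
    Xp huniq y' β = Xp huniq y β := by
  have hpb := py_congr huniq hag β hb.le
  rw [Xp, Xp, hpb, dsegtail_congr huniq hag hb]

end

end Stmt11Aux
namespace Stmt11Aux

open Ordinal Set Cardinal Topology

noncomputable section

variable {κ : Cardinal.{u}} {D : Set BSeq.{u, u}}
variable (huniq : ∀ x : Ordinal.{u} → Fin 2, ∃! t : BSeq.{u, u}, t ∈ D ∧ BExtFun t x)
variable (e : ↥(Set.Iio κ.ord) ≃ ↥D)

/-- The transfinite sequence of blocks from `D` coded by a point of Baire space. -/
def Xof (dflt : ↥D) (x : GBaire κ.ord) : Ordinal.{u} → BSeq.{u, u} := fun β =>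
  if h : β < κ.ord then ((e (x ⟨β, h⟩) : ↥D) : BSeq.{u, u}) else (dflt : BSeq.{u, u})

theorem Xof_mem (dflt : ↥D) (x : GBaire κ.ord) (β : Ordinal.{u}) :
    Xof e dflt x β ∈ D := by
  rw [Xof]
  split
  · exact Subtype.prop _
  · exact Subtype.prop _

/-- Extension of a point of Cantor space to a total function on ordinals. -/
def yext (y : GCantor κ.ord) : Ordinal.{u} → Fin 2 := fun ξ =>
  if h : ξ < κ.ord then y ⟨ξ, h⟩ else 0

/-- The forward homeomorphism: concatenate the blocks coded by `x`. -/
def Phi (dflt : ↥D) (x : GBaire κ.ord) : GCantor κ.ord := fun ξ =>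
  concat (Xof e dflt x) ξ.1

/-- The backward homeomorphism: parse `y` into blocks from `D`. -/
def Psi (y : GCantor κ.ord) : GBaire κ.ord := fun β =>
  e.symm ⟨Xp huniq (yext y) β.1, Xp_mem huniq _ _⟩

theorem left_inv_aux (hreg : κ.IsRegular) (hlim : Order.IsSuccLimit κ.ord)
    (hDlen : ∀ t ∈ D, bLen t < κ.ord) (hpos : ∀ t ∈ D, 0 < bLen t)
    (dflt : ↥D) (x : GBaire κ.ord) :
    Psi huniq e (Phi e dflt x) = x := by
  funext β
  have hXD : ∀ γ, Xof e dflt x γ ∈ D := Xof_mem e dflt x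
  have hlen : ∀ γ, lenF (Xof e dflt x) γ < κ.ord := fun γ => hDlen _ (hXD γ)
  have hsβ : py huniq (concat (Xof e dflt x)) (Order.succ β.1) < κ.ord := by
    rw [(py_concat huniq hpos hXD (Order.succ β.1)).1]
    exact sums_lt_ord hreg hlen (hlim.succ_lt β.2)
  have hag : ∀ ζ < py huniq (concat (Xof e dflt x)) (Order.succ β.1),
      yext (Phi e dflt x) ζ = concat (Xof e dflt x) ζ := by
    intro ζ hζ
    have hζo : ζ < κ.ord := hζ.trans hsβ
    rw [yext, dif_pos hζo]
    rfl
  have h1 : Xp huniq (yext (Phi e dflt x)) β.1 = Xp huniq (concat (Xof e dflt x)) β.1 :=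
    Xp_congr huniq hag (Order.lt_succ β.1)
  have h2 : Xp huniq (concat (Xof e dflt x)) β.1 = Xof e dflt x β.1 :=
    (py_concat huniq hpos hXD β.1).2
  have h3 : Xof e dflt x β.1 = ((e (x β) : ↥D) : BSeq.{u, u}) := by
    have hβo : (β : Ordinal.{u}) < κ.ord := β.2
    simp only [Xof]
    rw [dif_pos hβo]
  have h4 : (⟨Xp huniq (yext (Phi e dflt x)) β.1, Xp_mem huniq _ _⟩ : ↥D) = e (x β) :=
    Subtype.ext (h1.trans (h2.trans h3))
  have h5 : Psi huniq e (Phi e dflt x) β = e.symm (e (x β)) := congrArg e.symm h4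
  exact h5.trans (e.symm_apply_apply (x β))

theorem right_inv_aux (hpos : ∀ t ∈ D, 0 < bLen t) (dflt : ↥D) (y : GCantor κ.ord) :
    Phi e dflt (Psi huniq e y) = y := by
  funext ξ
  have hXag : ∀ γ ≤ (ξ : Ordinal.{u}), Xof e dflt (Psi huniq e y) γ = Xp huniq (yext y) γ := by
    intro γ hγ
    have hγo : γ < κ.ord := lt_of_le_of_lt hγ ξ.2
    simp only [Xof]
    rw [dif_pos hγo]
    show ((e (Psi huniq e y ⟨γ, hγo⟩) : ↥D) : BSeq.{u, u}) = Xp huniq (yext y) γ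
    have hψ : Psi huniq e y ⟨γ, hγo⟩
        = e.symm ⟨Xp huniq (yext y) γ, Xp_mem huniq _ _⟩ := rfl
    rw [hψ, Equiv.apply_symm_apply]
  have h1 : concat (Xof e dflt (Psi huniq e y)) ξ.1 = concat (Xp huniq (yext y)) ξ.1 :=
    concat_congr (Xp_pos huniq hpos (yext y)) hXag
  have h2 := concat_Xp huniq hpos (yext y) ξ.1
  show concat (Xof e dflt (Psi huniq e y)) ξ.1 = y ξ
  have hξo : (ξ : Ordinal.{u}) < κ.ord := ξ.2
  rw [h1, h2, yext, dif_pos hξo]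

theorem continuous_Phi (hpos : ∀ t ∈ D, 0 < bLen t) (dflt : ↥D) :
    Continuous[baireTopology κ.ord, cantorTopology κ.ord] (Phi e dflt) := by
  unfold baireTopology cantorTopology
  rw [continuous_generateFrom_iff]
  rintro U ⟨α, hα, s, rfl⟩
  have hkey : ∀ x ∈ Phi e dflt ⁻¹' {z : GCantor κ.ord |
        ∀ β : ↥(Set.Iio κ.ord), (β : Ordinal.{u}) < α → z β = s β},
      ∀ x' : GBaire κ.ord, (∀ β : ↥(Set.Iio κ.ord), (β : Ordinal.{u}) < α → x' β = x β) →
      ∀ β : ↥(Set.Iio κ.ord), (β : Ordinal.{u}) < α → Phi e dflt x' β = s β := by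
    intro x hx x' hx' β hβ
    have hagree : ∀ γ ≤ (β : Ordinal.{u}), Xof e dflt x' γ = Xof e dflt x γ := by
      intro γ hγ
      by_cases h : γ < κ.ord
      · simp only [Xof]
        rw [dif_pos h, dif_pos h, hx' ⟨γ, h⟩ (lt_of_le_of_lt hγ hβ)]
      · simp only [Xof]
        rw [dif_neg h, dif_neg h]
    have hcc : Phi e dflt x' β = Phi e dflt x β :=
      concat_congr (fun γ => hpos _ (Xof_mem e dflt x γ)) hagree
    exact hcc.trans (hx β hβ)
  have hU : Phi e dflt ⁻¹' {z : GCantor κ.ord |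
        ∀ β : ↥(Set.Iio κ.ord), (β : Ordinal.{u}) < α → z β = s β}
      = ⋃₀ ((fun x : GBaire κ.ord =>
          {x' : GBaire κ.ord | ∀ β : ↥(Set.Iio κ.ord), (β : Ordinal.{u}) < α → x' β = x β}) ''
        (Phi e dflt ⁻¹' {z : GCantor κ.ord |
          ∀ β : ↥(Set.Iio κ.ord), (β : Ordinal.{u}) < α → z β = s β})) := by
    ext x''
    constructor
    · intro hx''
      exact ⟨_, Set.mem_image_of_mem _ hx'', fun β hβ => rfl⟩
    · rintro ⟨V, ⟨x, hx, rfl⟩, hmem⟩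
      exact hkey x hx x'' hmem
  rw [hU]
  exact TopologicalSpace.GenerateOpen.sUnion _ fun V hV => by
    obtain ⟨x, -, rfl⟩ := hV
    exact TopologicalSpace.GenerateOpen.basic _ ⟨α, hα, x, rfl⟩

theorem continuous_Psi (hreg : κ.IsRegular) (hDlen : ∀ t ∈ D, bLen t < κ.ord) :
    Continuous[cantorTopology κ.ord, baireTopology κ.ord] (Psi huniq e) := by
  unfold baireTopology cantorTopology
  rw [continuous_generateFrom_iff]
  rintro U ⟨α, hα, s, rfl⟩
  have hkey : ∀ y ∈ Psi huniq e ⁻¹' {z : GBaire κ.ord |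
        ∀ β : ↥(Set.Iio κ.ord), (β : Ordinal.{u}) < α → z β = s β},
      ∀ y' : GCantor κ.ord,
      (∀ β : ↥(Set.Iio κ.ord), (β : Ordinal.{u}) < py huniq (yext y) α → y' β = y β) →
      ∀ β : ↥(Set.Iio κ.ord), (β : Ordinal.{u}) < α → Psi huniq e y' β = s β := by
    intro y hy y' hy' β hβ
    have hδ : py huniq (yext y) α < κ.ord := by
      rw [← sums_py huniq (yext y)]
      exact sums_lt_ord hreg (fun γ => hDlen _ (Xp_mem huniq (yext y) γ)) hα
    have hag : ∀ ζ < py huniq (yext y) α, yext y' ζ = yext y ζ := by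
      intro ζ hζ
      have hζo : ζ < κ.ord := hζ.trans hδ
      simp only [yext]
      rw [dif_pos hζo, dif_pos hζo]
      exact hy' ⟨ζ, hζo⟩ hζ
    have hXp : Xp huniq (yext y') β.1 = Xp huniq (yext y) β.1 := Xp_congr huniq hag hβ
    have h5 : Psi huniq e y' β = Psi huniq e y β :=
      congrArg e.symm (Subtype.ext hXp)
    exact h5.trans (hy β hβ)
  have hU : Psi huniq e ⁻¹' {z : GBaire κ.ord |
        ∀ β : ↥(Set.Iio κ.ord), (β : Ordinal.{u}) < α → z β = s β}
      = ⋃₀ ((fun y : GCantor κ.ord =>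
          {y' : GCantor κ.ord | ∀ β : ↥(Set.Iio κ.ord),
            (β : Ordinal.{u}) < py huniq (yext y) α → y' β = y β}) ''
        (Psi huniq e ⁻¹' {z : GBaire κ.ord |
          ∀ β : ↥(Set.Iio κ.ord), (β : Ordinal.{u}) < α → z β = s β})) := by
    ext y''
    constructor
    · intro hy''
      exact ⟨_, Set.mem_image_of_mem _ hy'', fun β hβ => rfl⟩
    · rintro ⟨V, ⟨y, hy, rfl⟩, hmem⟩
      exact hkey y hy y'' hmem
  rw [hU]
  refine TopologicalSpace.GenerateOpen.sUnion _ fun V hV => ?_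
  obtain ⟨y, hy, rfl⟩ := hV
  have hδ : py huniq (yext y) α < κ.ord := by
    rw [← sums_py huniq (yext y)]
    exact sums_lt_ord hreg (fun γ => hDlen _ (Xp_mem huniq (yext y) γ)) hα
  exact TopologicalSpace.GenerateOpen.basic _ ⟨py huniq (yext y) α, hδ, y, rfl⟩

end

end Stmt11Aux

/-- Let `κ` be an uncountable regular cardinal and `D` a set of
binary sequences of length `< κ`, of cardinality `κ`, such that every
`x : κ → 2` has exactly one initial segment in `D`.  Then the generalized Baire
space `^κ κ` of `κ` and the generalized Cantor space `^κ 2` of `κ` are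
homeomorphic. -/
theorem stmt11 (κ : Cardinal.{u}) (hreg : κ.IsRegular)
    (hunc : Cardinal.aleph0 < κ)
    (D : Set BSeq)
    (hD : ∀ t ∈ D, IsBSeq t ∧ bLen t < κ.ord)
    (hDcard : Cardinal.mk ↥D = Cardinal.lift.{u + 1} κ)
    (huniq : ∀ x : Ordinal → Fin 2, ∃! t : BSeq, t ∈ D ∧ BExtFun t x) :
    Nonempty (@Homeomorph (GBaire κ.ord) (GCantor κ.ord)
      (baireTopology κ.ord) (cantorTopology κ.ord)) := by
  classical
  have hlim : Order.IsSuccLimit κ.ord := Cardinal.isSuccLimit_ord hreg.aleph0_le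
  have hDlen : ∀ t ∈ D, bLen t < κ.ord := fun t ht => (hD t ht).2
  -- `D` is nontrivial
  have h1κ : (1 : Cardinal.{u + 1}) < Cardinal.lift.{u + 1} κ := by
    have h1 : (1 : Cardinal.{u}) < κ := Cardinal.one_lt_aleph0.trans hunc
    have h2 := (Cardinal.lift_lt.{u, u + 1}).mpr h1
    rwa [Cardinal.lift_one] at h2
  have hnt : Nontrivial ↥D := by
    rw [← Cardinal.one_lt_iff_nontrivial, hDcard]
    exact h1κ
  -- every element of `D` has positive length
  have hpos : ∀ t ∈ D, 0 < bLen t := by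
    intro t ht
    by_contra hc
    push_neg at hc
    have ht0 : bLen t = 0 := le_antisymm hc zero_le
    have hall : ∀ u ∈ D, u = t := by
      intro u hu
      have h1 : BExtFun u (bVal u) := fun β _ => rfl
      have h2 : BExtFun t (bVal u) := fun β hβ => by
        rw [ht0] at hβ
        exact absurd hβ (not_lt_zero (a := β))
      exact (huniq (bVal u)).unique ⟨hu, h1⟩ ⟨ht, h2⟩
    obtain ⟨⟨u, hu⟩, ⟨v, hv⟩, huv⟩ := hnt
    exact huv (Subtype.ext ((hall u hu).trans (hall v hv).symm))
  -- a bijection between `Iio κ.ord` and `D`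
  have hcard2 : Cardinal.mk ↥(Set.Iio κ.ord) = Cardinal.mk ↥D := by
    rw [Ordinal.mk_Iio_ordinal, Cardinal.card_ord, hDcard]
  obtain ⟨e⟩ : Nonempty (↥(Set.Iio κ.ord) ≃ ↥D) := Cardinal.eq.mp hcard2
  set dflt : ↥D := e ⟨0, hlim.pos⟩ with hdflt
  exact ⟨@Homeomorph.mk _ _ (baireTopology κ.ord) (cantorTopology κ.ord)
    ⟨Stmt11Aux.Phi e dflt, Stmt11Aux.Psi huniq e,
      Stmt11Aux.left_inv_aux huniq e hreg hlim hDlen hpos dflt,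
      Stmt11Aux.right_inv_aux huniq e hpos dflt⟩
    (Stmt11Aux.continuous_Phi e hpos dflt)
    (Stmt11Aux.continuous_Psi huniq e hreg hDlen)⟩
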